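/- In a generalised voting game, if x_min is an O-minimal action and x_max is an O-maximal action for player i and singletons of X i are measurable, then the criticality-0 increasingly and decreasingly critical sets are disjoint, and the probability of the criticality-0 totally critical set O_TC_i^0 := O_IC_i^0 ∪ O_DC_i^0 satisfies Pr(O_TC_i^0) = (Pr(O) − Pr(O | x_min)) + (μ i){x_min} · (Pr(O | x_max) − Pr(O | x_min)). -/
import Mathlib

open MeasureTheory Function

private lemma key_indep
    {ι : Type*} [Fintype ι] [DecidableEq ι]
    {X : ι → Type*} [∀ j, MeasurableSpace (X j)]
    (μ : ∀ j, Measure (X j)) [∀ j, IsProbabilityMeasure (μ j)]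
    (i : ι) [MeasurableSingletonClass (X i)] (a : X i)
    (B : Set (∀ j, X j)) (hB : MeasurableSet B)
    (hBinv : ∀ (ω : ∀ j, X j) (x : X i), update ω i x ∈ B ↔ ω ∈ B) :
    Measure.pi μ ((eval i ⁻¹' {a}) ∩ B) = μ i {a} * Measure.pi μ B := by
  have hmA : MeasurableSet (eval i ⁻¹' {a} : Set (∀ j, X j)) :=
    (measurable_pi_apply i) (measurableSet_singleton a)
  set f : (∀ j, X j) → ENNReal := ((eval i ⁻¹' {a}) ∩ B).indicator 1 with hfdef
  set g : (∀ j, X j) → ENNReal := fun ω => μ i {a} * B.indicator 1 ω with hgdef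
  have hf : Measurable f := measurable_const.indicator (hmA.inter hB)
  have hg : Measurable g := (measurable_const.indicator hB).const_mul _
  have hfg : ∫⋯∫⁻_{i}, f ∂μ = ∫⋯∫⁻_{i}, g ∂μ := by
    rw [lmarginal_singleton, lmarginal_singleton]
    funext x
    have hmem : ∀ xᵢ : X i, (update x i xᵢ ∈ eval i ⁻¹' {a} ∩ B) ↔ (xᵢ = a ∧ x ∈ B) := by
      intro xᵢ
      simp [Set.mem_preimage, Set.mem_inter_iff, hBinv x xᵢ, eval, update_self]
    by_cases hxB : x ∈ B
    · have h1 : ∀ xᵢ : X i, f (update x i xᵢ) = ({a} : Set (X i)).indicator 1 xᵢ := by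
        intro xᵢ
        show (eval i ⁻¹' {a} ∩ B).indicator 1 (update x i xᵢ) = _
        rcases eq_or_ne xᵢ a with rfl | hne
        · rw [Set.indicator_of_mem ((hmem _).mpr ⟨rfl, hxB⟩),
            Set.indicator_of_mem (Set.mem_singleton _)]
          rfl
        · rw [Set.indicator_of_notMem (fun h => hne ((hmem _).mp h).1)]
          exact (Set.indicator_of_notMem hne (1 : X i → ENNReal)).symm
      have h2 : ∀ xᵢ : X i, g (update x i xᵢ) = μ i {a} := by
        intro xᵢ
        show μ i {a} * B.indicator 1 (update x i xᵢ) = μ i {a}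
        rw [Set.indicator_of_mem ((hBinv x xᵢ).mpr hxB)]
        simp
      simp_rw [h1, h2]
      rw [lintegral_indicator_one (measurableSet_singleton a), lintegral_const, measure_univ,
        mul_one]
    · have h1 : ∀ xᵢ : X i, f (update x i xᵢ) = 0 := by
        intro xᵢ
        show (eval i ⁻¹' {a} ∩ B).indicator 1 (update x i xᵢ) = 0
        exact Set.indicator_of_notMem (fun h => hxB ((hmem _).mp h).2) _
      have h2 : ∀ xᵢ : X i, g (update x i xᵢ) = 0 := by
        intro xᵢ
        show μ i {a} * B.indicator 1 (update x i xᵢ) = 0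
        rw [Set.indicator_of_notMem (fun h => hxB ((hBinv x xᵢ).mp h)), mul_zero]
      simp_rw [h1, h2]
  have hmain := lintegral_eq_of_lmarginal_eq ({i} : Finset ι) hf hg hfg
  rw [hfdef, lintegral_indicator_one (hmA.inter hB)] at hmain
  rw [hmain]
  simp only [hgdef]
  rw [lintegral_const_mul (μ i {a}) (f := B.indicator 1) (measurable_const.indicator hB),
    lintegral_indicator_one hB]

theorem stmt_9
    {ι : Type*} [Fintype ι] [Nonempty ι] [DecidableEq ι]
    {X : ι → Type*} [∀ j, MeasurableSpace (X j)]
    (μ : ∀ j, Measure (X j)) [∀ j, IsProbabilityMeasure (μ j)]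
    {𝒪 : Type*} [MeasurableSpace 𝒪] [MeasurableSingletonClass 𝒪]
    (W : (∀ j, X j) → 𝒪) (hW : Measurable W)
    (O : 𝒪) (i : ι)
    (x_min : X i)
    (hmin : ∀ ω : ∀ j, X j, W (update ω i x_min) = O →
      ∀ x : X i, W (update ω i x) = O)
    (x_max : X i)
    (hmax : ∀ ω : ∀ j, X j, ∀ x : X i, W (update ω i x) = O →
      W (update ω i x_max) = O)
    [MeasurableSingletonClass (X i)]
    :
    Disjoint {ω | ω i = x_min ∧ W ω ≠ O ∧ W (update ω i x_max) = O} {ω | W ω = O ∧ W (update ω i x_min) ≠ O} ∧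
      Measure.pi μ ({ω | ω i = x_min ∧ W ω ≠ O ∧ W (update ω i x_max) = O} ∪ {ω | W ω = O ∧ W (update ω i x_min) ≠ O}) =
        (Measure.pi μ {ω | W ω = O} - Measure.pi μ {ω | W (update ω i x_min) = O}) +
          μ i {x_min} * (Measure.pi μ {ω | W (update ω i x_max) = O} - Measure.pi μ {ω | W (update ω i x_min) = O}) := by
  classical
  set S : Set (∀ j, X j) := {ω | W ω = O} with hSdef
  set Smin : Set (∀ j, X j) := {ω | W (update ω i x_min) = O} with hSmindef
  set Smax : Set (∀ j, X j) := {ω | W (update ω i x_max) = O} with hSmaxdef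
  have hmS : MeasurableSet S := hW (measurableSet_singleton O)
  have hmSmin : MeasurableSet Smin :=
    (hW.comp measurable_update_left) (measurableSet_singleton O)
  have hmSmax : MeasurableSet Smax :=
    (hW.comp measurable_update_left) (measurableSet_singleton O)
  have hsub1 : Smin ⊆ S := by
    intro ω hω
    have := hmin ω hω (ω i)
    rwa [update_eq_self] at this
  have hsub2 : Smin ⊆ Smax := fun ω hω => hmax ω x_min hω
  -- rewrite the two critical sets
  have hDCeq : {ω | W ω = O ∧ W (update ω i x_min) ≠ O} = S \ Smin := rfl
  have hICeq : {ω | ω i = x_min ∧ W ω ≠ O ∧ W (update ω i x_max) = O}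
      = (eval i ⁻¹' {x_min}) ∩ (Smax \ Smin) := by
    ext ω
    simp only [Set.mem_setOf_eq, Set.mem_inter_iff, Set.mem_preimage, Set.mem_singleton_iff,
      Set.mem_diff, eval]
    constructor
    · rintro ⟨h1, h2, h3⟩
      refine ⟨h1, h3, ?_⟩
      intro hc
      apply h2
      rw [hSmindef, Set.mem_setOf_eq, ← h1, update_eq_self] at hc
      exact hc
    · rintro ⟨h1, h2, h3⟩
      refine ⟨h1, ?_, h2⟩
      intro hc
      apply h3
      rw [hSmindef, Set.mem_setOf_eq, ← h1, update_eq_self]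
      exact hc
  have hdisj : Disjoint {ω : ∀ j, X j | ω i = x_min ∧ W ω ≠ O ∧ W (update ω i x_max) = O}
      {ω : ∀ j, X j | W ω = O ∧ W (update ω i x_min) ≠ O} := by
    rw [Set.disjoint_left]
    rintro ω ⟨_, h2, _⟩ ⟨h4, _⟩
    exact h2 h4
  refine ⟨hdisj, ?_⟩
  have hmDC : MeasurableSet (S \ Smin) := hmS.diff hmSmin
  rw [hICeq, hDCeq, measure_union (hICeq ▸ hdisj) hmDC]
  have hBinv : ∀ (ω : ∀ j, X j) (x : X i), update ω i x ∈ Smax \ Smin ↔ ω ∈ Smax \ Smin := by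
    intro ω x
    simp only [Set.mem_diff, hSmaxdef, hSmindef, Set.mem_setOf_eq, update_idem]
  have hIC : Measure.pi μ ((eval i ⁻¹' {x_min}) ∩ (Smax \ Smin))
      = μ i {x_min} * Measure.pi μ (Smax \ Smin) :=
    key_indep μ i x_min (Smax \ Smin) (hmSmax.diff hmSmin) hBinv
  rw [hIC,
    measure_diff hsub2 hmSmin.nullMeasurableSet (measure_ne_top _ _),
    measure_diff hsub1 hmSmin.nullMeasurableSet (measure_ne_top _ _),
    add_comm]
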